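/- Define κ(a,b) := ⟨a,b⟩/(‖a‖·‖b‖), ρ(a,b) := ‖a‖/‖b‖ and φ(a,b) := (κ(a,b) − ρ(a,b))/√(1 − κ(a,b)²). For any linearly independent a, b ∈ ℝ², the gradient with respect to a of the map a ↦ φ(a,b) is nonzero. -/

import Mathlib

open scoped RealInnerProductSpace

noncomputable def kappa (a b : EuclideanSpace ℝ (Fin 2)) : ℝ :=
  ⟪a, b⟫ / (‖a‖ * ‖b‖)

noncomputable def rho (a b : EuclideanSpace ℝ (Fin 2)) : ℝ :=
  ‖a‖ / ‖b‖

noncomputable def phi (a b : EuclideanSpace ℝ (Fin 2)) : ℝ :=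
  (kappa a b - rho a b) / Real.sqrt (1 - (kappa a b) ^ 2)

/-- Nondegeneracy of the phase of the linearized first-order scattering operator:
for linearly independent `a, b ∈ ℝ²`, the gradient of `a ↦ φ(a, b)` does not vanish. -/
theorem gradient_phi_ne_zero (a b : EuclideanSpace ℝ (Fin 2))
    (h : LinearIndependent ℝ ![a, b]) :
    gradient (fun a' => phi a' b) a ≠ 0 := by
  have hpair : ∀ s t : ℝ, s • a + t • b = 0 → s = 0 ∧ t = 0 :=
    LinearIndependent.pair_iff.mp h
  have ha : a ≠ 0 := by
    intro h0
    exact one_ne_zero (hpair 1 0 (by simp [h0])).1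
  have hb : b ≠ 0 := by
    intro h0
    exact one_ne_zero (hpair 0 1 (by simp [h0])).2
  have hna : (0:ℝ) < ‖a‖ := norm_pos_iff.mpr ha
  have hnb : (0:ℝ) < ‖b‖ := norm_pos_iff.mpr hb
  -- strict Cauchy-Schwarz
  have h1 : ⟪a, b⟫ < ‖a‖ * ‖b‖ := by
    rw [inner_lt_norm_mul_iff_real]
    intro heq
    have := hpair ‖b‖ (-‖a‖) (by rw [neg_smul, ← heq]; abel)
    exact hnb.ne' this.1
  have h2 : -(‖a‖ * ‖b‖) < ⟪a, b⟫ := by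
    have : ⟪-a, b⟫ < ‖-a‖ * ‖b‖ := by
      rw [inner_lt_norm_mul_iff_real]
      intro heq
      have := hpair ‖b‖ ‖-a‖ (by
        rw [smul_neg] at heq
        rw [← neg_eq_iff_eq_neg.mpr heq.symm]; abel)
      exact hnb.ne' this.1
    rw [inner_neg_left, norm_neg] at this
    linarith
  have habs : |kappa a b| < 1 := by
    rw [abs_lt, kappa]
    constructor
    · rw [lt_div_iff₀ (by positivity)]; linarith
    · rw [div_lt_iff₀ (by positivity)]; linarith
  have hK2 : 0 < 1 - (kappa a b) ^ 2 := by
    nlinarith [sq_abs (kappa a b), abs_nonneg (kappa a b)]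
  set S := Real.sqrt (1 - (kappa a b) ^ 2) with hS
  have hSpos : 0 < S := Real.sqrt_pos.mpr hK2
  set R := rho a b with hR
  have hRpos : 0 < R := div_pos hna hnb
  -- differentiability of phi (· , b) at a
  have hdnorm : DifferentiableAt ℝ (fun a' : EuclideanSpace ℝ (Fin 2) => ‖a'‖) a :=
    (differentiableAt_fun_id).norm ℝ ha
  have hdinner : DifferentiableAt ℝ (fun a' : EuclideanSpace ℝ (Fin 2) => ⟪a', b⟫) a :=
    (differentiableAt_fun_id).inner ℝ (differentiableAt_const b)
  have hdkappa : DifferentiableAt ℝ (fun a' => kappa a' b) a := by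
    unfold kappa
    simp only [div_eq_mul_inv]
    exact hdinner.mul ((hdnorm.mul_const ‖b‖).inv (by positivity))
  have hdrho : DifferentiableAt ℝ (fun a' => rho a' b) a := by
    unfold rho
    simp only [div_eq_mul_inv]
    exact hdnorm.mul_const _
  have hdphi : DifferentiableAt ℝ (fun a' => phi a' b) a := by
    unfold phi
    simp only [div_eq_mul_inv]
    refine (hdkappa.sub hdrho).mul (DifferentiableAt.inv ?_ hSpos.ne')
    exact DifferentiableAt.sqrt ((differentiableAt_const (1:ℝ)).sub (hdkappa.pow 2)) hK2.ne'
  intro hgrad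
  -- curve t ↦ t • a
  have hc : HasDerivAt (fun t : ℝ => t • a) a 1 := by
    simpa using (hasDerivAt_id (1:ℝ)).smul_const a
  have hf0 : HasFDerivAt (fun a' => phi a' b) (0 : EuclideanSpace ℝ (Fin 2) →L[ℝ] ℝ) a := by
    have := hdphi.hasGradientAt
    rw [hgrad] at this
    simpa using this.hasFDerivAt
  have hcomp : HasDerivAt (fun t : ℝ => phi (t • a) b) 0 1 := by
    have h' := (by rw [one_smul]; exact hf0 : HasFDerivAt (fun a' => phi a' b) (0 : EuclideanSpace ℝ (Fin 2) →L[ℝ] ℝ) ((1:ℝ) • a)).comp_hasDerivAt 1 hc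
    simp only [ContinuousLinearMap.zero_apply] at h'
    exact h'
  -- explicit formula for t > 0
  have heq : ∀ t : ℝ, 0 < t → phi (t • a) b = (kappa a b - t * R) / S := by
    intro t ht
    have hk : kappa (t • a) b = kappa a b := by
      unfold kappa
      rw [inner_smul_left, norm_smul, Real.norm_eq_abs, abs_of_pos ht]
      rw [RCLike.conj_to_real]
      rw [mul_assoc, mul_div_mul_left _ _ ht.ne']
    have hr : rho (t • a) b = t * R := by
      unfold rho at hR ⊢
      rw [norm_smul, Real.norm_eq_abs, abs_of_pos ht, hR, mul_div_assoc]
    rw [phi, hk, hr, hS]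
  have hg : HasDerivAt (fun t : ℝ => (kappa a b - t * R) / S) (-R / S) 1 := by
    have : HasDerivAt (fun t : ℝ => kappa a b - t * R) (-R) 1 := by
      simpa using ((hasDerivAt_id (1:ℝ)).mul_const R).const_sub (kappa a b)
    exact this.div_const S
  have hev : (fun t : ℝ => phi (t • a) b) =ᶠ[nhds 1] fun t => (kappa a b - t * R) / S := by
    filter_upwards [eventually_gt_nhds (show (0:ℝ) < 1 by norm_num)] with t ht
    exact heq t ht
  have hcomp' : HasDerivAt (fun t : ℝ => phi (t • a) b) (-R / S) 1 :=
    hg.congr_of_eventuallyEq hev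
  have : (0:ℝ) = -R / S := hcomp.unique hcomp'
  have : -R / S < 0 := div_neg_of_neg_of_pos (neg_neg_of_pos hRpos) hSpos
  linarith [hcomp.unique hcomp']
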